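/- Let G and H be real Banach spaces and A : G → H a Fredholm operator. Suppose H = H₁ ⊕ H₂ is a topological direct sum of closed subspaces H₁ and H₂, with continuous projections Pᵢ : H → Hᵢ, and set Aᵢ = Pᵢ ∘ A for i = 1, 2. If A₂ : G → H₂ is surjective, then the operator à : Ker(A₂) → H₁, x ↦ A(x), defined on the closed subspace Ker(A₂) = A⁻¹(H₁) of G, is a bounded linear Fredholm operator with Index(Ã) = Index(A). -/

import Mathlib

/-- A continuous linear operator between topological real modules is **Fredholm** if its kernel
is finite-dimensional and its image is closed and of finite codimension. -/
def IsFredholm {E F : Type*} [AddCommGroup E] [Module ℝ E] [TopologicalSpace E]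
    [AddCommGroup F] [Module ℝ F] [TopologicalSpace F] (T : E →L[ℝ] F) : Prop :=
  FiniteDimensional ℝ (LinearMap.ker (T : E →ₗ[ℝ] F)) ∧
    IsClosed ((LinearMap.range (T : E →ₗ[ℝ] F) : Submodule ℝ F) : Set F) ∧
    FiniteDimensional ℝ (F ⧸ LinearMap.range (T : E →ₗ[ℝ] F))

/-- The **index** of a (Fredholm) operator: `dim ker T - dim coker T`. -/
noncomputable def fredholmIndex {E F : Type*} [AddCommGroup E] [Module ℝ E] [TopologicalSpace E]
    [AddCommGroup F] [Module ℝ F] [TopologicalSpace F] (T : E →L[ℝ] F) : ℤ :=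
  (Module.finrank ℝ (LinearMap.ker (T : E →ₗ[ℝ] F)) : ℤ) - (Module.finrank ℝ (F ⧸ LinearMap.range (T : E →ₗ[ℝ] F)) : ℤ)

/-- **Proposition C.3.** Let `G`, `H` be real Banach spaces, `A : G → H` Fredholm, and
`H = H₁ ⊕ H₂` a topological direct sum of closed subspaces, with projections `Pᵢ` and
`Aᵢ = Pᵢ ∘ A`. If `A₂ : G → H₂` is surjective, then `Ã : Ker A₂ = A⁻¹(H₁) → H₁`, `x ↦ A x`,
is a bounded linear Fredholm operator with `Index Ã = Index A`. -/
theorem fredholm_restrict_preimage_of_proj_surjective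
    {G H : Type*} [NormedAddCommGroup G] [NormedSpace ℝ G] [CompleteSpace G]
    [NormedAddCommGroup H] [NormedSpace ℝ H] [CompleteSpace H]
    (A : G →L[ℝ] H) (hA : IsFredholm A)
    (H₁ H₂ : Submodule ℝ H) (hH₁ : IsClosed (H₁ : Set H)) (hH₂ : IsClosed (H₂ : Set H))
    (hcompl : IsCompl H₁ H₂)
    (hsurj : ∀ y : H₂, ∃ x : G,
      Submodule.linearProjOfIsCompl H₂ H₁ hcompl.symm (A x) = y) :
    IsFredholm ((A.comp (Submodule.comap (A : G →ₗ[ℝ] H) H₁).subtypeL).codRestrict H₁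
        (fun x => x.2)) ∧
      fredholmIndex ((A.comp (Submodule.comap (A : G →ₗ[ℝ] H) H₁).subtypeL).codRestrict H₁
        (fun x => x.2)) = fredholmIndex A := by
  classical
  set K : Submodule ℝ G := Submodule.comap (A : G →ₗ[ℝ] H) H₁ with hK
  set T : K →L[ℝ] H₁ := (A.comp K.subtypeL).codRestrict H₁ (fun x => x.2) with hT
  have hTval : ∀ x : K, ((T x : H₁) : H) = A (x : G) := fun x => rfl
  -- kernel
  have hker : (LinearMap.ker (T : K →ₗ[ℝ] H₁)).map K.subtype = LinearMap.ker (A : G →ₗ[ℝ] H) := by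
    ext y
    simp only [Submodule.mem_map, LinearMap.mem_ker]
    constructor
    · rintro ⟨x, hx, rfl⟩
      have h1 : ((T x : H₁) : H) = 0 := by rw [show T x = 0 from hx]; rfl
      rw [hTval] at h1
      exact h1
    · intro hy
      refine ⟨⟨y, ?_⟩, ?_, rfl⟩
      · show A y ∈ H₁
        rw [show A y = 0 from hy]; exact H₁.zero_mem
      · apply Subtype.ext
        show A y = ((0 : H₁) : H)
        simpa using hy
  have ekernel : (LinearMap.ker (T : K →ₗ[ℝ] H₁)) ≃ₗ[ℝ] (LinearMap.ker (A : G →ₗ[ℝ] H)) :=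
    ((LinearMap.ker (T : K →ₗ[ℝ] H₁)).equivMapOfInjective K.subtype (Submodule.injective_subtype K)).trans
      (LinearEquiv.ofEq _ _ hker)
  -- range
  have hrange : LinearMap.range (T : K →ₗ[ℝ] H₁) = (LinearMap.range (A : G →ₗ[ℝ] H)).comap H₁.subtype := by
    ext y
    simp only [LinearMap.mem_range, Submodule.mem_comap]
    constructor
    · rintro ⟨x, rfl⟩
      exact ⟨x, rfl⟩
    · rintro ⟨x, hx⟩
      have hx1 : A x ∈ H₁ := by rw [show A x = _ from hx]; exact y.2
      refine ⟨⟨x, hx1⟩, ?_⟩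
      apply Subtype.ext
      exact hx
  have hclosed : IsClosed ((LinearMap.range (T : K →ₗ[ℝ] H₁) : Submodule ℝ H₁) : Set H₁) := by
    have hset : ((LinearMap.range (T : K →ₗ[ℝ] H₁) : Submodule ℝ H₁) : Set H₁)
        = Subtype.val ⁻¹' ((LinearMap.range (A : G →ₗ[ℝ] H) : Submodule ℝ H) : Set H) := by
      ext y
      simp [hrange, Submodule.mem_comap]
    rw [hset]
    exact hA.2.1.preimage continuous_subtype_val
  -- cokernel
  have hmem : ∀ y : H, y - (Submodule.linearProjOfIsCompl H₂ H₁ hcompl.symm y : H) ∈ H₁ := by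
    intro y
    have heq : (Submodule.linearProjOfIsCompl H₂ H₁ hcompl.symm y : H)
        + (Submodule.linearProjOfIsCompl H₁ H₂ hcompl.symm.symm y : H) = y :=
      Submodule.projection_add_projection_eq_self hcompl.symm y
    have : y - (Submodule.linearProjOfIsCompl H₂ H₁ hcompl.symm y : H)
        = (Submodule.linearProjOfIsCompl H₁ H₂ hcompl.symm.symm y : H) :=
      sub_eq_of_eq_add' heq.symm
    rw [this]
    exact Submodule.coe_mem _
  have hsum : ∀ h : H, ∃ x : G, h - A x ∈ H₁ := by
    intro h
    obtain ⟨x, hx⟩ := hsurj (Submodule.linearProjOfIsCompl H₂ H₁ hcompl.symm h)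
    have h1 : h - (Submodule.linearProjOfIsCompl H₂ H₁ hcompl.symm h : H) ∈ H₁ := hmem h
    have h2 : A x - (Submodule.linearProjOfIsCompl H₂ H₁ hcompl.symm (A x) : H) ∈ H₁ := hmem (A x)
    rw [hx] at h2
    refine ⟨x, ?_⟩
    have : h - A x = (h - (Submodule.linearProjOfIsCompl H₂ H₁ hcompl.symm h : H))
        - (A x - (Submodule.linearProjOfIsCompl H₂ H₁ hcompl.symm h : H)) := by abel
    rw [this]
    exact H₁.sub_mem h1 h2
  set f : H₁ →ₗ[ℝ] H ⧸ LinearMap.range (A : G →ₗ[ℝ] H) := (LinearMap.range (A : G →ₗ[ℝ] H)).mkQ.comp H₁.subtype with hf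
  have hfsurj : Function.Surjective f := by
    intro z
    obtain ⟨h, rfl⟩ := (LinearMap.range (A : G →ₗ[ℝ] H)).mkQ_surjective z
    obtain ⟨x, hx⟩ := hsum h
    refine ⟨⟨h - A x, hx⟩, ?_⟩
    show Submodule.Quotient.mk (h - A x) = Submodule.Quotient.mk h
    rw [Submodule.Quotient.eq]
    simp
  have hkerf : LinearMap.ker f = LinearMap.range (T : K →ₗ[ℝ] H₁) := by
    rw [hf, LinearMap.ker_comp, Submodule.ker_mkQ, hrange]
  have ecoker : (H₁ ⧸ LinearMap.range (T : K →ₗ[ℝ] H₁)) ≃ₗ[ℝ] (H ⧸ LinearMap.range (A : G →ₗ[ℝ] H)) :=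
    (Submodule.quotEquivOfEq _ _ hkerf.symm).trans (f.quotKerEquivOfSurjective hfsurj)
  have hfinker : FiniteDimensional ℝ (LinearMap.ker (T : K →ₗ[ℝ] H₁)) := by
    have := hA.1
    exact Module.Finite.equiv ekernel.symm
  have hfincoker : FiniteDimensional ℝ (H₁ ⧸ LinearMap.range (T : K →ₗ[ℝ] H₁)) := by
    have := hA.2.2
    exact Module.Finite.equiv ecoker.symm
  refine ⟨⟨hfinker, hclosed, hfincoker⟩, ?_⟩
  unfold fredholmIndex
  rw [ekernel.finrank_eq, ecoker.finrank_eq]
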